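/- If k ≥ 9 and n ≥ 3k − 2, then C(n−2, k−2) − C(n−k−1, k−2) + 2 > 4·C(n−4, k−3) + C(n−4, k−4); that is, |A(n,k)| > |B(n,k)|. -/

import Mathlib

lemma starAux : ∀ s d : ℕ, 1 ≤ s → 1 ≤ d → 9 ≤ s + d →
    (2*s+3*d+1) * ((2*(s+d)+1).choose s) ≤ (3*d+1) * ((3*(s+d)).choose s) := by
  intro s
  induction s with
  | zero => intro d h _ _; omega
  | succ s ih =>
    intro d _ hd h9
    rcases Nat.eq_zero_or_pos s with rfl | hs1
    · -- base case s = 1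
      norm_num [Nat.choose_one_right]
      nlinarith [h9]
    · -- inductive step
      have IH := ih (d+1) hs1 (by omega) (by omega)
      have e1 : s + (d+1) = s + 1 + d := by omega
      rw [e1] at IH
      set X := (3*(s+1+d)).choose s with hX
      set Y := (2*(s+1+d)+1).choose s with hY
      set X' := (3*(s+1+d)).choose (s+1) with hX'
      set Y' := (2*(s+1+d)+1).choose (s+1) with hY'
      have hx : X' * (s+1) = X * (2*s+3*d+3) := by
        have := Nat.choose_succ_right_eq (3*(s+1+d)) s
        rwa [show 3*(s+1+d) - s = 2*s+3*d+3 from by omega] at this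
      have hy : Y' * (s+1) = Y * (s+2*d+3) := by
        have := Nat.choose_succ_right_eq (2*(s+1+d)+1) s
        rwa [show 2*(s+1+d)+1 - s = s+2*d+3 from by omega] at this
      have key : (s+2*d+3) * Y ≤ (3*d+1) * X := by
        have hpoly : (3*d+4) * (s+2*d+3) ≤ (3*d+1) * (2*s+3*(d+1)+1) := by
          rcases le_or_gt 2 d with h2 | h2
          · nlinarith
          · have : d = 1 := by omega
            subst this
            have : 7 ≤ s := by omega
            nlinarith
        have h1 : (3*d+4) * ((s+2*d+3) * Y) ≤ (3*d+1) * ((2*s+3*(d+1)+1) * Y) := by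
          calc (3*d+4) * ((s+2*d+3) * Y) = ((3*d+4) * (s+2*d+3)) * Y := by ring
            _ ≤ ((3*d+1) * (2*s+3*(d+1)+1)) * Y := Nat.mul_le_mul_right _ hpoly
            _ = (3*d+1) * ((2*s+3*(d+1)+1) * Y) := by ring
        have h2 : (3*d+1) * ((2*s+3*(d+1)+1) * Y) ≤ (3*d+1) * ((3*(d+1)+1) * X) :=
          Nat.mul_le_mul_left _ IH
        have h3 : (3*d+4) * ((s+2*d+3) * Y) ≤ (3*d+4) * ((3*d+1) * X) := by
          calc (3*d+4) * ((s+2*d+3) * Y) ≤ (3*d+1) * ((3*(d+1)+1) * X) := le_trans h1 h2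
            _ = (3*d+4) * ((3*d+1) * X) := by ring
        exact Nat.le_of_mul_le_mul_left h3 (by omega)
      have main : (2*(s+1)+3*d+1) * Y' * (s+1) ≤ (3*d+1) * X' * (s+1) := by
        calc (2*(s+1)+3*d+1) * Y' * (s+1) = (2*s+3*d+3) * (Y' * (s+1)) := by ring
          _ = (2*s+3*d+3) * (Y * (s+2*d+3)) := by rw [hy]
          _ = (2*s+3*d+3) * ((s+2*d+3) * Y) := by ring
          _ ≤ (2*s+3*d+3) * ((3*d+1) * X) := Nat.mul_le_mul_left _ key
          _ = (3*d+1) * (X * (2*s+3*d+3)) := by ring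
          _ = (3*d+1) * (X' * (s+1)) := by rw [hx]
          _ = (3*d+1) * X' * (s+1) := by ring
      exact Nat.le_of_mul_le_mul_right main (by omega)

lemma star (s d : ℕ) (hs : 1 ≤ s) (hd : 1 ≤ d) (h7 : 7 ≤ s + d) :
    (2*s+3*d+1) * ((2*(s+d)+1).choose s) ≤ (3*d+1) * ((3*(s+d)).choose s) := by
  rcases le_or_gt 9 (s+d) with h9 | h9
  · exact starAux s d hs hd h9
  · have hs7 : s ≤ 7 := by omega
    have hd7 : d ≤ 7 := by omega
    interval_cases s <;> interval_cases d <;> first | omega | decide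

-- B: C(2r+1,t+1) + 2 C(3r,t) ≤ C(3r,t+1)  for t+2 ≤ r, r ≥ 7
lemma lemB (r t : ℕ) (hr : 7 ≤ r) (ht : t + 2 ≤ r) :
    (2*r+1).choose (t+1) + 2 * (3*r).choose t ≤ (3*r).choose (t+1) := by
  obtain ⟨d, rfl⟩ : ∃ d, r = t + 1 + d := ⟨r - t - 1, by omega⟩
  have hd : 1 ≤ d := by omega
  have hstar := star (t+1) d (by omega) hd (by omega)
  rw [show t + 1 + d = (t+1) + d from rfl] at *
  set X := (3*((t+1)+d)).choose (t+1) with hX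
  set Y := (2*((t+1)+d)+1).choose (t+1) with hY
  set Z := (3*((t+1)+d)).choose t with hZ
  have hz : X * (t+1) = Z * (2*t+3*d+3) := by
    have := Nat.choose_succ_right_eq (3*((t+1)+d)) t
    rwa [show 3*((t+1)+d) - t = 2*t+3*d+3 from by omega] at this
  have hstar' : (2*t+3*d+3) * Y ≤ (3*d+1) * X := by
    have : 2*(t+1)+3*d+1 = 2*t+3*d+3 := by ring
    rwa [this] at hstar
  have main : (Y + 2 * Z) * (2*t+3*d+3) ≤ X * (2*t+3*d+3) := by
    calc (Y + 2 * Z) * (2*t+3*d+3) = (2*t+3*d+3) * Y + 2 * (Z * (2*t+3*d+3)) := by ring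
      _ = (2*t+3*d+3) * Y + 2 * (X * (t+1)) := by rw [hz]
      _ ≤ (3*d+1) * X + 2 * (X * (t+1)) := by
          exact Nat.add_le_add_right hstar' _
      _ = X * (2*t+3*d+3) := by ring
  exact Nat.le_of_mul_le_mul_right main (by omega)

-- E: (u+1) C(2u+3, u+1) ≤ C(3u+3, u)   (i.e. r C(2r+1,r) ≤ C(3r, r-1), r=u+1)
lemma lemE : ∀ u : ℕ, 6 ≤ u → (u+1) * ((2*u+3).choose (u+1)) ≤ (3*u+3).choose u := by
  intro u
  induction u with
  | zero => omega
  | succ u ih =>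
    intro hu
    rcases Nat.lt_or_ge u 6 with h6 | h6
    · have : u = 5 := by omega
      subst this
      decide
    · have IH := ih h6
      set a := (3*u+3).choose u with ha
      set b := (2*u+3).choose (u+1) with hb
      set c0 := (3*u+3).choose (u+1) with hc0
      set c1 := (3*u+4).choose (u+1) with hc1
      set c2 := (3*u+5).choose (u+1) with hc2
      set c3 := (3*u+6).choose (u+1) with hc3
      set e1 := (2*u+4).choose (u+2) with he1
      set e2 := (2*u+5).choose (u+2) with he2
      have h0 : c0 * (u+1) = a * (2*u+3) := by
        have := Nat.choose_succ_right_eq (3*u+3) u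
        rwa [show 3*u+3 - u = 2*u+3 from by omega] at this
      have h1 : c0 * (3*u+4) = c1 * (2*u+3) := by
        have := Nat.choose_mul_succ_eq (3*u+3) (u+1)
        rwa [show 3*u+3+1 = 3*u+4 from by ring, show 3*u+4 - (u+1) = 2*u+3 from by omega] at this
      have h2 : c1 * (3*u+5) = c2 * (2*u+4) := by
        have := Nat.choose_mul_succ_eq (3*u+4) (u+1)
        rwa [show 3*u+4+1 = 3*u+5 from by ring, show 3*u+5 - (u+1) = 2*u+4 from by omega] at this
      have h3 : c2 * (3*u+6) = c3 * (2*u+5) := by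
        have := Nat.choose_mul_succ_eq (3*u+5) (u+1)
        rwa [show 3*u+5+1 = 3*u+6 from by ring, show 3*u+6 - (u+1) = 2*u+5 from by omega] at this
      have h4 : (2*u+4) * b = e1 * (u+2) := by
        have := Nat.add_one_mul_choose_eq (2*u+3) (u+1)
        rwa [show 2*u+3+1 = 2*u+4 from by omega, show u+1+1 = u+2 from by omega] at this
      have h5 : e1 * (2*u+5) = e2 * (u+3) := by
        have := Nat.choose_mul_succ_eq (2*u+4) (u+2)
        rwa [show 2*u+4+1 = 2*u+5 from by ring, show 2*u+5 - (u+2) = u+3 from by omega] at this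
      -- chain identities (over ℤ via zify, then back)
      have hc : ((u+1)*(2*u+3)*(2*u+4)*(2*u+5))*c3 = ((2*u+3)*(3*u+4)*(3*u+5)*(3*u+6))*a := by
        zify at h0 h1 h2 h3 ⊢
        linear_combination (-((u+1:ℤ)*(2*u+3)*(2*u+4)))*h3 + (-((u+1:ℤ)*(2*u+3)*(3*u+6)))*h2
          + (-((u+1:ℤ)*(3*u+5)*(3*u+6)))*h1 + ((3*u+4:ℤ)*(3*u+5)*(3*u+6))*h0
      have he : ((u+2)*(u+3))*e2 = ((2*u+4)*(2*u+5))*b := by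
        zify at h4 h5 ⊢
        linear_combination (-(u+2:ℤ))*h5 + (-(2*u+5:ℤ))*h4
      -- now: goal (u+2) * e2 ≤ c3 ; after (3u+6) = 3(u+1)+3 etc rewriting
      have hpoly : (2*u+4)*(2*u+5)*((2*u+4)*(2*u+5)) ≤ (u+3)*((3*u+4)*(3*u+5)*(3*u+6)) := by
        nlinarith
      have main : ((u+1)*(2*u+3)*(2*u+4)*(2*u+5)*(u+3)) * ((u+2)*e2)
          ≤ ((u+1)*(2*u+3)*(2*u+4)*(2*u+5)*(u+3)) * c3 := by
        have l1 : ((u+1)*(2*u+3)*(2*u+4)*(2*u+5)*(u+3)) * ((u+2)*e2)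
            = ((u+1)*(2*u+3)) * ((2*u+4)*(2*u+5)*((2*u+4)*(2*u+5))) * b := by
          calc ((u+1)*(2*u+3)*(2*u+4)*(2*u+5)*(u+3)) * ((u+2)*e2)
              = ((u+1)*(2*u+3)*(2*u+4)*(2*u+5)) * (((u+2)*(u+3))*e2) := by ring
            _ = ((u+1)*(2*u+3)*(2*u+4)*(2*u+5)) * (((2*u+4)*(2*u+5))*b) := by rw [he]
            _ = ((u+1)*(2*u+3)) * ((2*u+4)*(2*u+5)*((2*u+4)*(2*u+5))) * b := by ring
        have l2 : ((u+1)*(2*u+3)*(2*u+4)*(2*u+5)*(u+3)) * c3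
            = ((u+3)*((3*u+4)*(3*u+5)*(3*u+6))) * (2*u+3) * a := by
          calc ((u+1)*(2*u+3)*(2*u+4)*(2*u+5)*(u+3)) * c3
              = (u+3) * (((u+1)*(2*u+3)*(2*u+4)*(2*u+5))*c3) := by ring
            _ = (u+3) * (((2*u+3)*(3*u+4)*(3*u+5)*(3*u+6))*a) := by rw [hc]
            _ = ((u+3)*((3*u+4)*(3*u+5)*(3*u+6))) * (2*u+3) * a := by ring
        rw [l1, l2]
        calc ((u+1)*(2*u+3)) * ((2*u+4)*(2*u+5)*((2*u+4)*(2*u+5))) * b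
            ≤ ((u+1)*(2*u+3)) * ((u+3)*((3*u+4)*(3*u+5)*(3*u+6))) * b := by
              exact Nat.mul_le_mul_right _ (Nat.mul_le_mul_left _ hpoly)
          _ = ((u+3)*((3*u+4)*(3*u+5)*(3*u+6))) * (2*u+3) * ((u+1) * b) := by ring
          _ ≤ ((u+3)*((3*u+4)*(3*u+5)*(3*u+6))) * (2*u+3) * a := by
              exact Nat.mul_le_mul_left _ IH
      have goal' : (u+2) * e2 ≤ c3 :=
        Nat.le_of_mul_le_mul_left main (by positivity)
      -- match the goal shape: u+1+1, 2*(u+1)+3 = 2u+5, 3*(u+1)+3 = 3u+6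
      have r1 : 2*(u+1)+3 = 2*u+5 := by ring
      have r2 : 3*(u+1)+3 = 3*u+6 := by ring
      rw [r1, r2, show u+1+1 = u+2 from by ring]
      exact goal'

lemma lemD (r : ℕ) (hr : 7 ≤ r) :
    ∀ m, 3*r+2 ≤ m → ∀ t, t + 3 ≤ r →
    (m-r-1).choose (t+2) + 4*((m-2).choose (t+1)) + (m-2).choose t ≤ m.choose (t+2) := by
  intro m hm
  induction m, hm using Nat.le_induction with
  | base =>
    intro t ht
    have e1 : 3*r+2-r-1 = 2*r+1 := by omega
    have e2 : 3*r+2-2 = 3*r := by omega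
    rw [e1, e2]
    have hp : (3*r+2).choose (t+2) = (3*r).choose t + 2*((3*r).choose (t+1)) + (3*r).choose (t+2) := by
      rw [show (3*r+2 : ℕ) = (3*r+1)+1 from rfl, show (t+2 : ℕ) = (t+1)+1 from rfl,
        Nat.choose_succ_succ (3*r+1) (t+1), Nat.choose_succ_succ (3*r) t,
        Nat.choose_succ_succ (3*r) (t+1)]
      ring
    have hb := lemB r (t+1) hr (by omega)
    rw [show (t+1+1 : ℕ) = t+2 from rfl] at hb
    omega
  | succ m hm ih =>
    intro t ht
    have e1 : m+1-r-1 = (m-r-1)+1 := by omega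
    have e2 : m+1-2 = (m-2)+1 := by omega
    rw [e1, e2]
    have p1 : (m+1).choose (t+2) = m.choose (t+1) + m.choose (t+2) := by
      rw [show (t+2 : ℕ) = (t+1)+1 from rfl, Nat.choose_succ_succ m (t+1)]
    have p2 : ((m-r-1)+1).choose (t+2) = (m-r-1).choose (t+1) + (m-r-1).choose (t+2) := by
      rw [show (t+2 : ℕ) = (t+1)+1 from rfl, Nat.choose_succ_succ (m-r-1) (t+1)]
    have p3 : ((m-2)+1).choose (t+1) = (m-2).choose t + (m-2).choose (t+1) :=
      Nat.choose_succ_succ (m-2) t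
    have iht := ih t ht
    rcases Nat.eq_zero_or_pos t with rfl | htpos
    · have p4 : ((m-2)+1).choose 0 = 1 := Nat.choose_zero_right _
      have c0 : (m-2).choose 0 = 1 := Nat.choose_zero_right _
      have c1 : (m-r-1).choose 1 = m-r-1 := Nat.choose_one_right _
      have c2 : m.choose 1 = m := Nat.choose_one_right _
      simp only [Nat.zero_add] at p1 p2 p3 iht ⊢
      omega
    · obtain ⟨t', rfl⟩ : ∃ t', t = t'+1 := ⟨t-1, by omega⟩
      have p4 : ((m-2)+1).choose (t'+1) = (m-2).choose t' + (m-2).choose (t'+1) :=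
        Nat.choose_succ_succ (m-2) t'
      have iht' := ih t' (by omega)
      rw [show (t'+1+1 : ℕ) = t'+2 from rfl] at *
      omega

lemma lemF (w : ℕ) (hw : 4 ≤ w) :
    ∀ m, 3*(w+3)+2 ≤ m →
    (m-(w+3)-1).choose (w+3) + 4*((m-2).choose (w+2)) + (m-2).choose (w+1)
      < m.choose (w+3) + 2 := by
  intro m hm
  induction m, hm using Nat.le_induction with
  | base =>
    have e1 : 3*(w+3)+2-(w+3)-1 = 2*(w+3)+1 := by omega
    have e2 : 3*(w+3)+2-2 = 3*(w+3) := by omega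
    rw [e1, e2]
    have hp : (3*(w+3)+2).choose (w+3)
        = (3*(w+3)).choose (w+1) + 2*((3*(w+3)).choose (w+2)) + (3*(w+3)).choose (w+3) := by
      rw [show (3*(w+3)+2 : ℕ) = (3*(w+3)+1)+1 from rfl, show (w+3 : ℕ) = (w+2)+1 from rfl,
        Nat.choose_succ_succ (3*(w+3)+1) (w+2), Nat.choose_succ_succ (3*(w+3)) (w+1),
        Nat.choose_succ_succ (3*(w+3)) (w+2)]
      ring
    have hE := lemE (w+2) (by omega)
    have hid : (3*(w+3)).choose (w+3) * (w+3) = (3*(w+3)).choose (w+2) * (2*(w+3)+1) := by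
      have h := Nat.choose_succ_right_eq (3*(w+3)) (w+2)
      rw [show (3*(w+3) - (w+2) : ℕ) = 2*(w+3)+1 from by omega] at h
      rw [show (w+3 : ℕ) = (w+2)+1 from rfl]
      exact h
    have hE' : (w+3) * ((2*(w+3)+1).choose (w+3)) ≤ (3*(w+3)).choose (w+2) := by
      have e3 : (2*(w+3)+1 : ℕ) = 2*(w+2)+3 := by ring
      have e4 : (3*(w+3) : ℕ) = 3*(w+2)+3 := by ring
      rw [e3, e4]
      rw [show (w+3 : ℕ) = (w+2)+1 from rfl]
      exact hE
    have key : (2*(w+3)+1).choose (w+3) + 2*((3*(w+3)).choose (w+2))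
        ≤ (3*(w+3)).choose (w+3) + 1 := by
      have hmul : (w+3) * ((2*(w+3)+1).choose (w+3) + 2*((3*(w+3)).choose (w+2)))
          ≤ (w+3) * ((3*(w+3)).choose (w+3) + 1) := by
        nlinarith [hE', hid]
      exact Nat.le_of_mul_le_mul_left hmul (by omega)
    omega
  | succ m hm ih =>
    have e1 : m+1-(w+3)-1 = (m-(w+3)-1)+1 := by omega
    have e2 : m+1-2 = (m-2)+1 := by omega
    rw [e1, e2]
    have p1 : (m+1).choose (w+3) = m.choose (w+2) + m.choose (w+3) := by
      rw [show (w+3 : ℕ) = (w+2)+1 from rfl, Nat.choose_succ_succ m (w+2)]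
    have p2 : ((m-(w+3)-1)+1).choose (w+3)
        = (m-(w+3)-1).choose (w+2) + (m-(w+3)-1).choose (w+3) := by
      rw [show (w+3 : ℕ) = (w+2)+1 from rfl, Nat.choose_succ_succ (m-(w+3)-1) (w+2)]
    have p3 : ((m-2)+1).choose (w+2) = (m-2).choose (w+1) + (m-2).choose (w+2) := by
      rw [show (w+2 : ℕ) = (w+1)+1 from rfl, Nat.choose_succ_succ (m-2) (w+1)]
    have p4 : ((m-2)+1).choose (w+1) = (m-2).choose w + (m-2).choose (w+1) :=
      Nat.choose_succ_succ (m-2) w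
    have hD := lemD (w+3) (by omega) m hm w (by omega)
    rw [show (m-(w+3)-1 : ℕ) = m-(w+3)-1 from rfl] at hD
    omega

theorem A_gt_B (n k : ℕ) (hk : 9 ≤ k) (hn : 3 * k - 2 ≤ n) :
    (n - 2).choose (k - 2) - (n - k - 1).choose (k - 2) + 2 >
      4 * (n - 4).choose (k - 3) + (n - 4).choose (k - 4) := by
  obtain ⟨w, rfl⟩ : ∃ w, k = w + 5 := ⟨k - 5, by omega⟩
  have hw : 4 ≤ w := by omega
  obtain ⟨m, rfl⟩ : ∃ m, n = m + 2 := ⟨n - 2, by omega⟩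
  have hm : 3*(w+3)+2 ≤ m := by omega
  have hF := lemF w hw m hm
  have e1 : m + 2 - 2 = m := by omega
  have e2 : w + 5 - 2 = w + 3 := by omega
  have e3 : m + 2 - (w+5) - 1 = m - (w+3) - 1 := by omega
  have e4 : m + 2 - 4 = m - 2 := by omega
  have e5 : w + 5 - 3 = w + 2 := by omega
  have e6 : w + 5 - 4 = w + 1 := by omega
  rw [e1, e2, e3, e4, e5, e6]
  have hmono : (m-(w+3)-1).choose (w+3) ≤ m.choose (w+3) :=
    Nat.choose_le_choose (w+3) (by omega)
  omega
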